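/- The 2-category of graphs internal to categories, Grph(Cat) := [G, Cat] where G is the free-standing parallel pair, is cartesian closed. -/

import Mathlib

open CategoryTheory Limits

universe u

section Aux

open MonoidalCategory

/-- The exponential functor on `Cat`: `X ↦ A ⥤ X`. -/
def expFunctor (A : Cat.{u,u}) : Cat.{u,u} ⥤ Cat.{u,u} where
  obj X := Cat.of (A ⥤ X)
  map f := ((Functor.whiskeringRight _ _ _).obj f.toFunctor).toCatHom
  map_id _ := rfl
  map_comp _ _ := rfl

/-- The exponential adjunction `A × - ⊣ (A ⥤ -)` on `Cat`. -/
def expAdj (A : Cat.{u,u}) : tensorLeft A ⊣ expFunctor A :=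
  Adjunction.mkOfHomEquiv
  { homEquiv := fun X Y =>
      { toFun := fun F => (Functor.curry.obj (CategoryTheory.Prod.swap X A ⋙ F.toFunctor)).toCatHom
        invFun := fun G => (CategoryTheory.Prod.swap A X ⋙ Functor.uncurry.obj G.toFunctor).toCatHom
        left_inv := fun F => by
          show (CategoryTheory.Prod.swap A X ⋙
            Functor.uncurry.obj (Functor.curry.obj (CategoryTheory.Prod.swap X A ⋙ F.toFunctor))).toCatHom = F
          rw [Functor.uncurry_obj_curry_obj]
          rfl
        right_inv := fun G => by
          show (Functor.curry.obj (CategoryTheory.Prod.swap X A ⋙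
            (CategoryTheory.Prod.swap A X ⋙ Functor.uncurry.obj G.toFunctor))).toCatHom = G
          exact congrArg Functor.toCatHom (Functor.curry_obj_uncurry_obj G.toFunctor) }
    homEquiv_naturality_left_symm := fun f g => rfl
    homEquiv_naturality_right := fun f g => rfl }

instance : MonoidalClosed Cat.{u,u} where
  closed A := { rightAdj := expFunctor A, adj := expAdj A }

end Aux

/-- The 2-category `Grph(Cat) = [G, Cat]` of graphs internal
to categories, where `G` is the free-standing parallel pair, is cartesian
closed. -/
theorem grphCat_cartesianClosed :
    Nonempty (MonoidalClosed (WalkingParallelPair ⥤ Cat.{u, u})) := by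
  have : HasLimitsOfSize.{0,0} Cat.{u,u} := hasLimitsOfSizeShrink.{0,0} _
  exact ⟨Functor.functorCategoryMonoidalClosed _ _⟩
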